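/- Let E be a complex Banach space, ℰ a bounded open sector at 0, and f, g : ℰ → E holomorphic, both admitting the same formal series f̂ ∈ E[[ε]] as Gevrey asymptotic expansion of order α > 0 on ℰ. Then f − g is exponentially flat of order α: for every closed proper subsector W ⊆ ℰ there exist K, M > 0 with ‖f(ε) − g(ε)‖ ≤ K exp(−M/|ε|^α) for all ε ∈ W. -/

import Mathlib

/-- The open sector at the origin with radius `R` and angles in `(a, b)`. -/
noncomputable def Sector18 (R a b : ℝ) : Set ℂ :=
  {ε : ℂ | ε ≠ 0 ∧ ‖ε‖ < R ∧
    ∃ φ : ℝ, a < φ ∧ φ < b ∧ ε = (‖ε‖ : ℂ) * Complex.exp ((φ : ℂ) * Complex.I)}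

/-- A closed subsector: radius `≤ R`, angles in `[a, b]`. -/
noncomputable def ClosedSector18 (R a b : ℝ) : Set ℂ :=
  {ε : ℂ | ε ≠ 0 ∧ ‖ε‖ ≤ R ∧
    ∃ φ : ℝ, a ≤ φ ∧ φ ≤ b ∧ ε = (‖ε‖ : ℂ) * Complex.exp ((φ : ℂ) * Complex.I)}

/-- `f` admits the formal series with coefficients `c` as Gevrey asymptotic expansion of
order `α` on the sector of radius `R` and angles `(a,b)`. -/
def HasGevreyExpansion18 (E : Type*) [NormedAddCommGroup E] [NormedSpace ℂ E]
    (α R a b : ℝ) (f : ℂ → E) (c : ℕ → E) : Prop :=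
  ∀ R' a' b' : ℝ, 0 < R' → R' < R → a < a' → a' ≤ b' → b' < b →
    ∃ C > 0, ∃ M > 0, ∀ N : ℕ, 1 ≤ N → ∀ ε ∈ ClosedSector18 R' a' b',
      ‖f ε - ∑ j ∈ Finset.range N, ε ^ j • c j‖ ≤
        C * M ^ N * (Nat.factorial N : ℝ) ^ ((1 : ℝ) / α) * ‖ε‖ ^ N

/-- If two holomorphic functions on a sector admit the same Gevrey asymptotic expansion
of order `α`, their difference is exponentially flat of order `α` on every closed proper
subsector. -/
theorem stmt_18 (E : Type*) [NormedAddCommGroup E] [NormedSpace ℂ E]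
    (R a b α : ℝ) (hR : 0 < R) (hab : a < b) (hα : 0 < α)
    (f g : ℂ → E) (c : ℕ → E)
    (hfhol : DifferentiableOn ℂ f (Sector18 R a b))
    (hghol : DifferentiableOn ℂ g (Sector18 R a b))
    (hf : HasGevreyExpansion18 E α R a b f c)
    (hg : HasGevreyExpansion18 E α R a b g c) :
    ∀ R' a' b' : ℝ, 0 < R' → R' < R → a < a' → a' ≤ b' → b' < b →
      ∃ K > 0, ∃ M > 0, ∀ ε ∈ ClosedSector18 R' a' b',
        ‖f ε - g ε‖ ≤ K * Real.exp (-M / ‖ε‖ ^ α) := by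
  intro R' a' b' hR' hR'R ha' hab' hb'
  obtain ⟨C1, hC1, M1, hM1, h1⟩ := hf R' a' b' hR' hR'R ha' hab' hb'
  obtain ⟨C2, hC2, M2, hM2, h2⟩ := hg R' a' b' hR' hR'R ha' hab' hb'
  set C : ℝ := C1 + C2 with hC
  set M : ℝ := max M1 M2 with hM
  have hCpos : 0 < C := by positivity
  have hMpos : 0 < M := lt_max_of_lt_left hM1
  have hα' : (0:ℝ) ≤ (1:ℝ)/α := by positivity
  -- combined bound for the difference
  have key : ∀ N : ℕ, 1 ≤ N → ∀ ε ∈ ClosedSector18 R' a' b',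
      ‖f ε - g ε‖ ≤ C * M ^ N * (Nat.factorial N : ℝ) ^ ((1:ℝ)/α) * ‖ε‖ ^ N := by
    intro N hN ε hε
    have e1 := h1 N hN ε hε
    have e2 := h2 N hN ε hε
    have hsplit : f ε - g ε = (f ε - ∑ j ∈ Finset.range N, ε ^ j • c j)
        - (g ε - ∑ j ∈ Finset.range N, ε ^ j • c j) := by abel
    have hFnn : (0:ℝ) ≤ (Nat.factorial N : ℝ) ^ ((1:ℝ)/α) := by positivity
    have hrnn : (0:ℝ) ≤ ‖ε‖ ^ N := by positivity
    have hM1M : M1 ^ N ≤ M ^ N := pow_le_pow_left₀ hM1.le (le_max_left _ _) N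
    have hM2M : M2 ^ N ≤ M ^ N := pow_le_pow_left₀ hM2.le (le_max_right _ _) N
    calc ‖f ε - g ε‖
        ≤ ‖f ε - ∑ j ∈ Finset.range N, ε ^ j • c j‖
          + ‖g ε - ∑ j ∈ Finset.range N, ε ^ j • c j‖ := by
          rw [hsplit]; exact norm_sub_le _ _
      _ ≤ C1 * M1 ^ N * (Nat.factorial N : ℝ) ^ ((1:ℝ)/α) * ‖ε‖ ^ N
          + C2 * M2 ^ N * (Nat.factorial N : ℝ) ^ ((1:ℝ)/α) * ‖ε‖ ^ N :=
          add_le_add e1 e2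
      _ ≤ C1 * M ^ N * (Nat.factorial N : ℝ) ^ ((1:ℝ)/α) * ‖ε‖ ^ N
          + C2 * M ^ N * (Nat.factorial N : ℝ) ^ ((1:ℝ)/α) * ‖ε‖ ^ N := by
          gcongr
      _ = C * M ^ N * (Nat.factorial N : ℝ) ^ ((1:ℝ)/α) * ‖ε‖ ^ N := by
          rw [hC]; ring
  set δ : ℝ := Real.exp (-1) * M ^ (-α) with hδ
  have hMα : (0:ℝ) < M ^ (-α) := Real.rpow_pos_of_pos hMpos _
  have hδpos : 0 < δ := by positivity
  have hK1 : (0:ℝ) < max 1 (M * R') := lt_max_of_lt_left one_pos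
  refine ⟨C * max 1 (M * R') * Real.exp (1/α), by positivity, δ / α, by positivity, ?_⟩
  intro ε hε
  have hε0 := hε.1
  have hεR := hε.2.1
  set r : ℝ := ‖ε‖ with hr
  have hrpos : 0 < r := norm_pos_iff.mpr hε0
  have hrapos : 0 < r ^ α := Real.rpow_pos_of_pos hrpos α
  set t : ℝ := δ / r ^ α with ht
  have htpos : 0 < t := div_pos hδpos hrapos
  have hexp_eq : -(δ / α) / r ^ α = -(t / α) := by rw [ht]; ring
  rw [show (-(δ / α) / r ^ α) = (-(t / α)) from hexp_eq]
  rcases Nat.lt_or_ge ⌊t⌋₊ 1 with hN0 | hN1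
  · -- t < 1 : use N = 1
    have ht1 : t < 1 := by
      have := (Nat.floor_lt htpos.le).mp hN0
      simpa using this
    have hkey := key 1 le_rfl ε hε
    have hb1 : C * M ^ 1 * (Nat.factorial 1 : ℝ) ^ ((1:ℝ)/α) * r ^ 1 = C * M * r := by
      simp [Nat.factorial]
    rw [hb1] at hkey
    have hMrR : C * M * r ≤ C * max 1 (M * R') := by
      have h4 : M * r ≤ M * R' := mul_le_mul_of_nonneg_left hεR hMpos.le
      have h5 : M * r ≤ max 1 (M * R') := h4.trans (le_max_right _ _)
      calc C * M * r = C * (M * r) := by ring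
        _ ≤ C * max 1 (M * R') := mul_le_mul_of_nonneg_left h5 hCpos.le
    have hone : (1:ℝ) ≤ Real.exp (1/α) * Real.exp (-(t/α)) := by
      rw [← Real.exp_add]
      refine Real.one_le_exp ?_
      have : t / α ≤ 1 / α := by gcongr
      linarith
    calc ‖f ε - g ε‖ ≤ C * max 1 (M * R') := hkey.trans hMrR
      _ = C * max 1 (M * R') * 1 := by ring
      _ ≤ C * max 1 (M * R') * (Real.exp (1/α) * Real.exp (-(t/α))) := by
          exact mul_le_mul_of_nonneg_left hone (by positivity)
      _ = C * max 1 (M * R') * Real.exp (1/α) * Real.exp (-(t/α)) := by ring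
  · -- t ≥ 1 : use N = ⌊t⌋₊
    set N : ℕ := ⌊t⌋₊ with hNdef
    have hNt : (N:ℝ) ≤ t := Nat.floor_le htpos.le
    have htN1 : t < N + 1 := Nat.lt_floor_add_one t
    have hkey := key N hN1 ε hε
    set X : ℝ := (N:ℝ) ^ ((1:ℝ)/α) with hX
    have hXnn : 0 ≤ X := Real.rpow_nonneg (Nat.cast_nonneg N) _
    -- factorial bound
    have hfac : (Nat.factorial N : ℝ) ^ ((1:ℝ)/α) ≤ X ^ N := by
      have h6 : (Nat.factorial N : ℝ) ≤ (N:ℝ) ^ N := by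
        exact_mod_cast Nat.factorial_le_pow N
      have h7 : (Nat.factorial N : ℝ) ^ ((1:ℝ)/α) ≤ ((N:ℝ) ^ N) ^ ((1:ℝ)/α) :=
        Real.rpow_le_rpow (by positivity) h6 hα'
      have h8 : ((N:ℝ) ^ N) ^ ((1:ℝ)/α) = X ^ N := by
        rw [hX, ← Real.rpow_natCast ((N:ℝ)) N, ← Real.rpow_mul (Nat.cast_nonneg N),
          ← Real.rpow_natCast ((N:ℝ) ^ ((1:ℝ)/α)) N, ← Real.rpow_mul (Nat.cast_nonneg N)]
        ring_nf
      exact h8 ▸ h7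
    -- δ^(1/α) = exp(-(1/α)) / M
    have hδr : δ ^ ((1:ℝ)/α) = Real.exp (-(1/α)) / M := by
      rw [hδ, Real.mul_rpow (Real.exp_pos _).le hMα.le, ← Real.exp_mul,
        ← Real.rpow_mul hMpos.le]
      rw [show (-1 : ℝ) * (1/α) = -(1/α) by ring,
        show -α * (1/α) = -1 by field_simp]
      rw [Real.rpow_neg_one]
      ring
    -- M * X * r ≤ exp(-(1/α))
    have hMXr : M * X * r ≤ Real.exp (-(1/α)) := by
      have h9 : X ≤ t ^ ((1:ℝ)/α) :=
        Real.rpow_le_rpow (Nat.cast_nonneg N) hNt hα'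
      have h10 : t ^ ((1:ℝ)/α) = δ ^ ((1:ℝ)/α) / r := by
        rw [ht, Real.div_rpow hδpos.le hrapos.le, ← Real.rpow_mul hrpos.le,
          show α * (1/α) = 1 by field_simp, Real.rpow_one]
      have h11 : X ≤ Real.exp (-(1/α)) / M / r := by
        rw [← hδr, ← h10]; exact h9
      calc M * X * r ≤ M * (Real.exp (-(1/α)) / M / r) * r := by
            gcongr
        _ = Real.exp (-(1/α)) := by field_simp
    -- main chain
    have hmain : C * M ^ N * (Nat.factorial N : ℝ) ^ ((1:ℝ)/α) * r ^ N
        ≤ C * Real.exp (-(1/α)) ^ N := by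
      have h12 : M ^ N * (Nat.factorial N : ℝ) ^ ((1:ℝ)/α) * r ^ N
          ≤ (M * X * r) ^ N := by
        have h13 : M ^ N * (Nat.factorial N : ℝ) ^ ((1:ℝ)/α) * r ^ N
            ≤ M ^ N * X ^ N * r ^ N := by gcongr
        have h14 : M ^ N * X ^ N * r ^ N = (M * X * r) ^ N := by
          rw [mul_pow, mul_pow]
        linarith [h13, h14.le]
      have h15 : (M * X * r) ^ N ≤ Real.exp (-(1/α)) ^ N :=
        pow_le_pow_left₀ (by positivity) hMXr N
      calc C * M ^ N * (Nat.factorial N : ℝ) ^ ((1:ℝ)/α) * r ^ N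
          = C * (M ^ N * (Nat.factorial N : ℝ) ^ ((1:ℝ)/α) * r ^ N) := by ring
        _ ≤ C * (M * X * r) ^ N := mul_le_mul_of_nonneg_left h12 hCpos.le
        _ ≤ C * Real.exp (-(1/α)) ^ N := mul_le_mul_of_nonneg_left h15 hCpos.le
    have hexpN : Real.exp (-(1/α)) ^ N ≤ Real.exp (1/α) * Real.exp (-(t/α)) := by
      rw [← Real.exp_nat_mul, ← Real.exp_add]
      refine Real.exp_le_exp.mpr ?_
      have h16 : (t - 1) / α ≤ (N:ℝ) / α := by
        gcongr
        linarith
      have h17 : (N:ℝ) * -(1/α) = -((N:ℝ)/α) := by ring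
      rw [h17]
      have : (t - 1)/α = t/α - 1/α := by ring
      linarith [h16, this]
    calc ‖f ε - g ε‖ ≤ C * M ^ N * (Nat.factorial N : ℝ) ^ ((1:ℝ)/α) * r ^ N := hkey
      _ ≤ C * Real.exp (-(1/α)) ^ N := hmain
      _ ≤ C * (Real.exp (1/α) * Real.exp (-(t/α))) :=
          mul_le_mul_of_nonneg_left hexpN hCpos.le
      _ ≤ C * max 1 (M * R') * Real.exp (1/α) * Real.exp (-(t/α)) := by
          have : C * (Real.exp (1/α) * Real.exp (-(t/α)))
              ≤ C * max 1 (M * R') * (Real.exp (1/α) * Real.exp (-(t/α))) := by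
            have h18 : C ≤ C * max 1 (M * R') := by
              nlinarith [le_max_left (1:ℝ) (M * R')]
            exact mul_le_mul_of_nonneg_right h18 (by positivity)
          linarith [this]
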